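/- Let H be a complex Hilbert space, let P₀, S ∈ Σ⁺(H) with ‖P₀‖ ≤ ρ, and let T > 0. Then for every t ∈ [0, T] the operator I + tP₀S is boundedly invertible and ‖(I + tP₀S)⁻¹P₀‖ ≤ (1 + Tρ‖S‖)ρ. -/

import Mathlib

set_option maxHeartbeats 1000000

/-- For positive operators `P₀, S` on a complex Hilbert space with `‖P₀‖ ≤ ρ`,
and `T > 0`, for every `t ∈ [0, T]` the operator `I + tP₀S` is boundedly invertible and
`‖(I + tP₀S)⁻¹P₀‖ ≤ (1 + Tρ‖S‖)ρ`. -/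
theorem stmt_1 {H : Type*} [NormedAddCommGroup H] [InnerProductSpace ℂ H] [CompleteSpace H]
    (P₀ S : H →L[ℂ] H) (hP₀ : P₀.IsPositive) (hS : S.IsPositive)
    (ρ T : ℝ) (hρ : ‖P₀‖ ≤ ρ) (hT : 0 < T) :
    ∀ t ∈ Set.Icc (0 : ℝ) T,
      IsUnit (1 + t • (P₀ * S)) ∧
        ‖Ring.inverse (1 + t • (P₀ * S)) * P₀‖ ≤ (1 + T * ρ * ‖S‖) * ρ := by
  have hP : (0 : H →L[ℂ] H) ≤ P₀ := (ContinuousLinearMap.nonneg_iff_isPositive P₀).mpr hP₀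
  have hS' : (0 : H →L[ℂ] H) ≤ S := (ContinuousLinearMap.nonneg_iff_isPositive S).mpr hS
  set Q : H →L[ℂ] H := CFC.sqrt P₀ with hQdef
  have hQ : (0 : H →L[ℂ] H) ≤ Q := CFC.sqrt_nonneg P₀
  have hQ2 : Q * Q = P₀ := by
    have := CFC.sq_sqrt P₀ hP
    rwa [sq] at this
  have hρ0 : (0 : ℝ) ≤ ρ := le_trans (norm_nonneg _) hρ
  intro t ht
  obtain ⟨ht0, htT⟩ := ht
  set a : H →L[ℂ] H := t • S with hadef
  have ha : (0 : H →L[ℂ] H) ≤ a := by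
    rw [hadef, ContinuousLinearMap.nonneg_iff_isPositive]
    refine ⟨ContinuousLinearMap.isSelfAdjoint_iff_isSymmetric.mp (IsSelfAdjoint.smul (star_trivial t) hS.isSelfAdjoint), fun x => ?_⟩
    rw [ContinuousLinearMap.reApplyInnerSelf_apply, ContinuousLinearMap.smul_apply,
        RCLike.real_smul_eq_coe_smul (K := ℂ), inner_smul_left, RCLike.conj_ofReal,
        RCLike.re_ofReal_mul]
    exact mul_nonneg ht0 (hS.re_inner_nonneg_left x)
  have hPa : t • (P₀ * S) = Q * Q * a := by
    rw [hadef, hQ2, mul_smul_comm]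
  have hQaQ : (0 : H →L[ℂ] H) ≤ Q * a * Q := by
    have := star_left_conjugate_nonneg ha Q
    rw [(IsSelfAdjoint.of_nonneg hQ).star_eq] at this
    simpa [mul_assoc] using this
  set c : H →L[ℂ] H := 1 + Q * a * Q with hcdef
  have hc1 : (1 : H →L[ℂ] H) ≤ c := le_add_of_nonneg_right hQaQ
  have hcu : IsUnit c := CStarAlgebra.isUnit_of_le 1 hc1
  obtain ⟨C, hC⟩ := hcu
  set d : H →L[ℂ] H := ↑C⁻¹ with hddef
  have hdc : d * c = 1 := by rw [hddef, ← hC]; exact C.inv_mul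
  have hcd : c * d = 1 := by rw [hddef, ← hC]; exact C.mul_inv
  have hC0 : (0 : H →L[ℂ] H) ≤ (C : H →L[ℂ] H) := by rw [hC]; exact zero_le_one.trans hc1
  have hd0 : (0 : H →L[ℂ] H) ≤ d := CFC.inv_nonneg_of_nonneg C hC0
  have hd1 : d ≤ 1 := CStarAlgebra.inv_le_one (by rw [← Units.val_le_val, hC, Units.val_one]; exact hc1)
  have hdnorm : ‖d‖ ≤ 1 := (CStarAlgebra.norm_le_one_iff_of_nonneg d hd0).mpr hd1
  -- explicit inverse
  set u : H →L[ℂ] H := 1 - Q * (d * (Q * a)) with hudef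
  have hcd' : d + d * (Q * a * Q) = 1 := by
    have := hdc; rw [hcdef, mul_add, mul_one] at this; exact this
  have hdc' : d + Q * a * Q * d = 1 := by
    have := hcd; rw [hcdef, add_mul, one_mul] at this; exact this
  have key1 : (1 + Q * Q * a) * u = 1 := by
    have e : (1 + Q * Q * a) * u
        = 1 + Q * ((1 - (d + Q * a * Q * d)) * (Q * a)) := by
      rw [hudef]; noncomm_ring
    rw [e, hdc']; simp
  have key2 : u * (1 + Q * Q * a) = 1 := by
    have e : u * (1 + Q * Q * a)
        = 1 + Q * ((1 - (d + d * (Q * a * Q))) * (Q * a)) := by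
      rw [hudef]; noncomm_ring
    rw [e, hcd']; simp
  have key3 : u * P₀ = Q * d * Q := by
    have e : u * (Q * Q) = Q * ((1 - d * (Q * a * Q)) * Q) := by
      rw [hudef]; noncomm_ring
    have h5 : (1 : H →L[ℂ] H) - d * (Q * a * Q) = d := by
      rw [← hcd']; noncomm_ring
    rw [← hQ2, e, h5, ← mul_assoc]
  have hx : 1 + t • (P₀ * S) = 1 + Q * Q * a := by rw [hPa]
  rw [hx]
  refine ⟨⟨⟨1 + Q * Q * a, u, key1, key2⟩, rfl⟩, ?_⟩
  have hinv : Ring.inverse (1 + Q * Q * a) = u :=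
    Ring.inverse_unit (⟨1 + Q * Q * a, u, key1, key2⟩ : (H →L[ℂ] H)ˣ)
  rw [hinv, key3]
  have hQsa : star Q = Q := IsSelfAdjoint.of_nonneg hQ
  have hQQ : ‖Q‖ * ‖Q‖ = ‖P₀‖ := by
    have := CStarRing.norm_star_mul_self (x := Q)
    rw [hQsa, hQ2] at this
    exact this.symm
  have h1 : ‖Q * d * Q‖ ≤ ‖Q‖ * ‖d‖ * ‖Q‖ :=
    le_trans (norm_mul_le _ _) (by gcongr; exact norm_mul_le _ _)
  have h2 : ‖Q‖ * ‖d‖ * ‖Q‖ ≤ ‖Q‖ * 1 * ‖Q‖ := by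
    gcongr
  have h3 : ‖Q‖ * 1 * ‖Q‖ = ‖P₀‖ := by rw [mul_one, hQQ]
  have h4 : ‖P₀‖ ≤ (1 + T * ρ * ‖S‖) * ρ := by
    nlinarith [norm_nonneg S, hT.le, mul_nonneg (mul_nonneg hT.le hρ0) (norm_nonneg S)]
  linarith
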